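/- Let $n \ge 2$, let $R_i, C_j$ be real numbers, let $M = \max\{\max_i(-R_i/(n-1)), \max_i(-C_i/(n-1))\}$, assume $M > \ln 2$, and let $\varepsilon > 0$ satisfy $\psi(2\varepsilon) - \psi(\varepsilon) = M$. Define $g_i(a,b) = \psi^{-1}\big(\tfrac{R_i}{n-1} + \tfrac{1}{n-1}\sum_{j\ne i}\psi(a_i + b_j)\big)$ and $h_j(a,b) = \psi^{-1}\big(\tfrac{C_j}{n-1} + \tfrac{1}{n-1}\sum_{i\ne j}\psi(a_i + b_j)\big)$. Then evaluating at the constant vector $(\varepsilon, \dots, \varepsilon)$, we have $g_i(\varepsilon \mathbf{1}) \ge \varepsilon$ and $h_j(\varepsilon \mathbf{1}) \ge \varepsilon$ for all $i, j$. -/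

import Mathlib

open Finset

/-- The digamma function `ψ = Γ'/Γ`, as the derivative of `log ∘ Γ` on `(0,∞)`. -/
noncomputable def digamma (x : ℝ) : ℝ := deriv (fun y => Real.log (Real.Gamma y)) x

/-- The inverse of the digamma function on `(0,∞)`. -/
noncomputable def digammaInv (y : ℝ) : ℝ := Function.invFunOn digamma (Set.Ioi 0) y

lemma hasDerivAt_logGamma {x : ℝ} (hx : 0 < x) :
    HasDerivAt (fun y => Real.log (Real.Gamma y)) (digamma x) x := by
  have hd : DifferentiableAt ℝ (fun y => Real.log (Real.Gamma y)) x := by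
    refine DifferentiableAt.log ?_ (Real.Gamma_pos_of_pos hx).ne'
    refine Real.differentiableAt_Gamma fun m => ?_
    have : (0:ℝ) ≤ m := Nat.cast_nonneg m
    intro h; rw [h] at hx; linarith
  simpa [digamma] using hd.hasDerivAt

lemma digamma_mono {x y : ℝ} (hx : 0 < x) (hxy : x < y) : digamma x ≤ digamma y := by
  have hy : 0 < y := lt_trans hx hxy
  have h1 := Real.convexOn_log_Gamma.le_slope_of_hasDerivAt (Set.mem_Ioi.2 hx)
    (Set.mem_Ioi.2 hy) hxy (hasDerivAt_logGamma hx)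
  have h2 := Real.convexOn_log_Gamma.slope_le_of_hasDerivAt (Set.mem_Ioi.2 hx)
    (Set.mem_Ioi.2 hy) hxy (hasDerivAt_logGamma hy)
  exact le_trans h1 h2

lemma digamma_add_one {x : ℝ} (hx : 0 < x) : digamma (x + 1) = digamma x + 1 / x := by
  have h1 : HasDerivAt (fun y => Real.log (Real.Gamma (y + 1))) (digamma (x + 1)) x := by
    simpa [Function.comp_def] using (hasDerivAt_logGamma (by linarith : (0:ℝ) < x + 1)).comp x
      ((hasDerivAt_id x).add_const 1)
  have h2 : HasDerivAt (fun y => Real.log y + Real.log (Real.Gamma y)) (1 / x + digamma x) x := by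
    simpa [one_div, Pi.add_def] using (Real.hasDerivAt_log hx.ne').add (hasDerivAt_logGamma hx)
  have heq : (fun y => Real.log (Real.Gamma (y + 1)))
      =ᶠ[nhds x] (fun y => Real.log y + Real.log (Real.Gamma y)) := by
    filter_upwards [eventually_gt_nhds hx] with y hy
    rw [Real.Gamma_add_one hy.ne', Real.log_mul hy.ne' (Real.Gamma_pos_of_pos hy).ne']
  have h3 : HasDerivAt (fun y => Real.log (Real.Gamma (y + 1))) (1 / x + digamma x) x :=
    h2.congr_of_eventuallyEq heq
  have := h1.unique h3
  linarith

lemma digamma_surj (t : ℝ) : ∃ x, 0 < x ∧ digamma x = t := by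
  set a := Real.exp t with ha_def
  have ha : 0 < a := Real.exp_pos t
  have hab : a < a + 1 := by linarith
  have hcont : ContinuousOn (fun y => Real.log (Real.Gamma y)) (Set.Icc a (a + 1)) := by
    intro y hy
    exact (hasDerivAt_logGamma (lt_of_lt_of_le ha hy.1)).continuousAt.continuousWithinAt
  have hderiv : ∀ y ∈ Set.Ioo a (a + 1),
      HasDerivAt (fun y => Real.log (Real.Gamma y)) (digamma y) y :=
    fun y hy => hasDerivAt_logGamma (lt_trans ha hy.1)
  obtain ⟨c, hc, hceq⟩ := exists_hasDerivAt_eq_slope (fun y => Real.log (Real.Gamma y))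
    digamma hab hcont hderiv
  refine ⟨c, lt_trans ha hc.1, ?_⟩
  rw [hceq, Real.Gamma_add_one ha.ne', Real.log_mul ha.ne' (Real.Gamma_pos_of_pos ha).ne']
  simp [ha_def, Real.log_exp]

lemma le_digammaInv {t ε : ℝ} (hε : 0 < ε) (ht : digamma ε ≤ t) : ε ≤ digammaInv t := by
  obtain ⟨x0, hx0, hx0t⟩ := digamma_surj t
  have hex : ∃ x ∈ Set.Ioi (0:ℝ), digamma x = t := ⟨x0, Set.mem_Ioi.2 hx0, hx0t⟩
  have hmem : digammaInv t ∈ Set.Ioi (0:ℝ) := Function.invFunOn_mem hex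
  have heq : digamma (digammaInv t) = t := Function.invFunOn_eq hex
  set x := digammaInv t
  have hx : 0 < x := hmem
  by_contra hlt
  push_neg at hlt
  have h1 : digamma x ≤ digamma ε := digamma_mono hx hlt
  have h2 : digamma ε ≤ digamma x := by rw [heq]; exact ht
  have hx1 : digamma (x + 1) = digamma x + 1 / x := digamma_add_one hx
  have hε1 : digamma (ε + 1) = digamma ε + 1 / ε := digamma_add_one hε
  have hmono : digamma (x + 1) ≤ digamma (ε + 1) := digamma_mono (by linarith) (by linarith)
  have hinv : 1 / ε < 1 / x := one_div_lt_one_div_of_lt hx hlt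
  linarith

theorem fixed_point_map_ge_eps (n : ℕ) (hn : 2 ≤ n) (R C : Fin n → ℝ)
    (M : ℝ) (hne : (univ : Finset (Fin n)).Nonempty)
    (hM : M = max ((univ : Finset (Fin n)).sup' hne (fun i => -R i / (n - 1)))
      ((univ : Finset (Fin n)).sup' hne (fun i => -C i / (n - 1))))
    (hMgt : Real.log 2 < M)
    (ε : ℝ) (hε : 0 < ε) (hεM : digamma (2 * ε) - digamma ε = M)
    (g h : (Fin n → ℝ) → (Fin n → ℝ) → Fin n → ℝ)
    (hg : ∀ a b i, g a b i =
      digammaInv (R i / (n - 1) + (1 / (n - 1)) * ∑ j ∈ univ \ {i}, digamma (a i + b j)))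
    (hh : ∀ a b j, h a b j =
      digammaInv (C j / (n - 1) + (1 / (n - 1)) * ∑ i ∈ univ \ {j}, digamma (a i + b j))) :
    (∀ i, ε ≤ g (fun _ => ε) (fun _ => ε) i) ∧
    (∀ j, ε ≤ h (fun _ => ε) (fun _ => ε) j) := by
  have hn1 : (0:ℝ) < (n:ℝ) - 1 := by
    have : (2:ℝ) ≤ (n:ℝ) := by exact_mod_cast hn
    linarith
  have hcard : ∀ i : Fin n, ((univ : Finset (Fin n)) \ {i}).card = n - 1 := by
    intro i
    rw [Finset.card_sdiff_of_subset (by simp)]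
    simp
  have hsum : ∀ i : Fin n,
      (1 / ((n:ℝ) - 1)) * ∑ _j ∈ univ \ {i}, digamma (ε + ε) = digamma (2 * ε) := by
    intro i
    rw [Finset.sum_const, hcard i, nsmul_eq_mul]
    have hcast : ((n - 1 : ℕ) : ℝ) = (n:ℝ) - 1 := by
      have := Nat.cast_sub (le_trans (by norm_num) hn) (R := ℝ) (m := 1) (n := n)
      simpa using this
    rw [hcast]
    have : ε + ε = 2 * ε := by ring
    rw [this]
    field_simp
  constructor
  · intro i
    rw [hg]
    have hRle : -R i / ((n:ℝ) - 1) ≤ M := by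
      rw [hM]
      exact le_max_of_le_left (Finset.le_sup' (fun i => -R i / ((n:ℝ) - 1)) (mem_univ i))
    apply le_digammaInv hε
    rw [hsum i]
    have : -M ≤ R i / ((n:ℝ) - 1) := by
      rw [neg_div] at hRle; linarith
    linarith
  · intro j
    rw [hh]
    have hCle : -C j / ((n:ℝ) - 1) ≤ M := by
      rw [hM]
      exact le_max_of_le_right (Finset.le_sup' (fun i => -C i / ((n:ℝ) - 1)) (mem_univ j))
    apply le_digammaInv hε
    rw [hsum j]
    have : -M ≤ C j / ((n:ℝ) - 1) := by
      rw [neg_div] at hCle; linarith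
    linarith
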